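/- Let ρ₀ be a density matrix on ℂ^d, and for t ∈ [0,1] define ρ(t) := Re ρ₀ + i (1−t) Im ρ₀. Then: (i) each ρ(t) is a density matrix; (ii) ‖Im ρ(t)‖₁ = (1−t) ‖Im ρ₀‖₁ for all t ∈ [0,1], so in particular ‖Im ρ(1)‖₁ = 0; and (iii) ∫₀¹ ‖Im (d/dt ρ(t))‖₁ dt = ‖Im ρ₀‖₁ = |‖Im ρ(1)‖₁ − ‖Im ρ(0)‖₁|, i.e. the bound | ‖Im ρ_T‖₁ − ‖Im ρ_0‖₁ | ≤ ∫₀ᵀ ‖Im ρ̇_t‖₁ dt is saturated by this evolution. -/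

import Mathlib

open Matrix
open scoped ComplexOrder

noncomputable section

/-- The positive semidefinite square root, as defined in Mathlib (Dec 2024); since removed. -/
def Matrix.PosSemidef.sqrt {n : Type*} [Fintype n] [DecidableEq n] {A : Matrix n n ℂ}
    (hA : A.PosSemidef) : Matrix n n ℂ :=
  (hA.1.eigenvectorUnitary : Matrix n n ℂ) * diagonal ((↑) ∘ (√·) ∘ hA.1.eigenvalues) *
    (star (hA.1.eigenvectorUnitary : Matrix n n ℂ))

/-- A density matrix: Hermitian, positive semidefinite, trace one. -/
def IsDensityMatrix {d : ℕ} (ρ : Matrix (Fin d) (Fin d) ℂ) : Prop :=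
  ρ.IsHermitian ∧ ρ.PosSemidef ∧ ρ.trace = 1

/-- The real part `(ρ + ρᵀ)/2` of a matrix. -/
def reM {d : ℕ} (ρ : Matrix (Fin d) (Fin d) ℂ) : Matrix (Fin d) (Fin d) ℂ :=
  (2⁻¹ : ℂ) • (ρ + ρᵀ)

/-- The imaginary part `(ρ - ρᵀ)/(2i)` of a matrix. -/
def imM {d : ℕ} (ρ : Matrix (Fin d) (Fin d) ℂ) : Matrix (Fin d) (Fin d) ℂ :=
  (2 * Complex.I)⁻¹ • (ρ - ρᵀ)

/-- The Hilbert–Schmidt norm `√(tr (Aᴴ A))`. -/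
def hsNorm {d : ℕ} (A : Matrix (Fin d) (Fin d) ℂ) : ℝ :=
  Real.sqrt ((Aᴴ * A).trace.re)

/-- The trace norm `tr √(Aᴴ A)`. -/
def traceNorm {d : ℕ} (A : Matrix (Fin d) (Fin d) ℂ) : ℝ :=
  ((Matrix.posSemidef_conjTranspose_mul_self A).sqrt.trace).re

/-- Matrix logarithm via the continuous functional calculus (on Hermitian matrices). -/
def matLog {d : ℕ} (A : Matrix (Fin d) (Fin d) ℂ) : Matrix (Fin d) (Fin d) ℂ :=
  cfc Real.log A

open scoped Classical in
/-- The positive semidefinite square root of a positive semidefinite matrix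
(junk value `0` otherwise). -/
def msqrt {d : ℕ} (A : Matrix (Fin d) (Fin d) ℂ) : Matrix (Fin d) (Fin d) ℂ :=
  if h : A.PosSemidef then h.sqrt else 0

/-- The von Neumann entropy `S(ρ) = -tr(ρ log ρ)`. -/
def vnEntropy {d : ℕ} (ρ : Matrix (Fin d) (Fin d) ℂ) : ℝ :=
  -((ρ * matLog ρ).trace.re)

/-- The relative entropy of imaginarity `M_r(ρ) = S(Re ρ) - S(ρ)`. -/
def Mr {d : ℕ} (ρ : Matrix (Fin d) (Fin d) ℂ) : ℝ :=
  vnEntropy (reM ρ) - vnEntropy ρ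

/-- The root fidelity `tr √(√ρ σ √ρ)`. -/
def rootFid {d : ℕ} (ρ σ : Matrix (Fin d) (Fin d) ℂ) : ℝ :=
  ((msqrt (msqrt ρ * σ * msqrt ρ)).trace).re

/-- The geometric imaginarity `M_g(ρ) = (1 - √F(ρ, ρᵀ))/2`. -/
def Mg {d : ℕ} (ρ : Matrix (Fin d) (Fin d) ℂ) : ℝ :=
  (1 - rootFid ρ ρᵀ) / 2

/-- The Hilbert–Schmidt inner product `⟨A, B⟩ = tr(Aᴴ B)`. -/
def hsInner {d : ℕ} (A B : Matrix (Fin d) (Fin d) ℂ) : ℂ :=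
  (Aᴴ * B).trace

/-- The operator norm of a map on matrices induced by the Hilbert–Schmidt norm. -/
def opNormHS {d : ℕ} (L : Matrix (Fin d) (Fin d) ℂ → Matrix (Fin d) (Fin d) ℂ) : ℝ :=
  sSup {x : ℝ | ∃ ψ, hsNorm ψ = 1 ∧ x = hsNorm (L ψ)}

/-- The Liouville-space normalized vector `ρ̃ = ρ / ‖ρ‖_HS`. -/
def hsNormalize {d : ℕ} (A : Matrix (Fin d) (Fin d) ℂ) : Matrix (Fin d) (Fin d) ℂ :=
  ((hsNorm A : ℂ))⁻¹ • A

/-- The fluctuation `Δ𝓛 = √(‖𝓛ψ‖² - |⟨ψ, 𝓛ψ⟩|²)` of a superoperator at a unit vector. -/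
def fluct {d : ℕ} (L : Matrix (Fin d) (Fin d) ℂ → Matrix (Fin d) (Fin d) ℂ)
    (ψ : Matrix (Fin d) (Fin d) ℂ) : ℝ :=
  Real.sqrt ((hsNorm (L ψ)) ^ 2 - (‖hsInner ψ (L ψ)‖) ^ 2)

lemma smul_posSemidef {d : ℕ} {r : ℝ} (hr : 0 ≤ r) {A : Matrix (Fin d) (Fin d) ℂ}
    (hA : A.PosSemidef) : ((r : ℂ) • A).PosSemidef := by
  constructor
  · have h1 := hA.1
    unfold Matrix.IsHermitian at *
    rw [conjTranspose_smul, h1]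
    simp
  · exact (hA.smul (a := (r : ℂ)) (by exact_mod_cast hr)).2

lemma trace_re_nonneg {d : ℕ} {A : Matrix (Fin d) (Fin d) ℂ} (hA : A.PosSemidef) :
    0 ≤ A.trace.re := by
  have h : ∀ i, 0 ≤ (A i i).re := by
    intro i
    have h0 := hA.dotProduct_mulVec_nonneg (Pi.single i 1)
    have he : star (Pi.single i 1) ⬝ᵥ A *ᵥ (Pi.single i 1 : Fin d → ℂ) = A i i := by
      simp [dotProduct, mulVec, Pi.single_apply, apply_ite (starRingEnd ℂ), Finset.sum_ite_eq,
        mul_ite, ite_mul]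
    rw [he] at h0
    exact (Complex.le_def.mp h0).1
  rw [Matrix.trace, Complex.re_sum]
  exact Finset.sum_nonneg fun i _ => h i

section sqrtAux
open scoped MatrixOrder

lemma Matrix.PosSemidef.sqrt_eq_cfcSqrt {d : ℕ} {A : Matrix (Fin d) (Fin d) ℂ}
    (hA : A.PosSemidef) : hA.sqrt = CFC.sqrt A := by
  rw [CFC.sqrt_eq_cfc, cfc_nnreal_eq_real _ A, hA.1.cfc_eq]
  simp only [Matrix.PosSemidef.sqrt, IsHermitian.cfc, Unitary.conjStarAlgAut_apply]
  congr 3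
  funext i
  simp [Real.coe_sqrt, Real.coe_toNNReal', max_eq_left (hA.eigenvalues_nonneg i)]

lemma Matrix.PosSemidef.posSemidef_sqrt {d : ℕ} {A : Matrix (Fin d) (Fin d) ℂ}
    (hA : A.PosSemidef) : hA.sqrt.PosSemidef := by
  rw [hA.sqrt_eq_cfcSqrt]
  exact (CFC.sqrt_nonneg A).posSemidef

lemma Matrix.PosSemidef.sq_sqrt {d : ℕ} {A : Matrix (Fin d) (Fin d) ℂ}
    (hA : A.PosSemidef) : hA.sqrt ^ 2 = A := by
  rw [hA.sqrt_eq_cfcSqrt]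
  exact CFC.sq_sqrt A hA.nonneg

lemma Matrix.PosSemidef.eq_sqrt_of_sq_eq {d : ℕ} {A : Matrix (Fin d) (Fin d) ℂ}
    {hA : A.PosSemidef} {B : Matrix (Fin d) (Fin d) ℂ} (hB : B.PosSemidef) (hAB : B ^ 2 = A) :
    B = hA.sqrt := by
  rw [hA.sqrt_eq_cfcSqrt]
  exact (CFC.sqrt_unique (by rw [← sq]; exact hAB) hB.nonneg).symm

end sqrtAux

lemma traceNorm_nonneg {d : ℕ} (A : Matrix (Fin d) (Fin d) ℂ) : 0 ≤ traceNorm A :=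
  trace_re_nonneg (Matrix.posSemidef_conjTranspose_mul_self A).posSemidef_sqrt

lemma sqrt_smul' {d : ℕ} (c : ℂ) (A : Matrix (Fin d) (Fin d) ℂ) :
    (Matrix.posSemidef_conjTranspose_mul_self (c • A)).sqrt
      = ((‖c‖ : ℝ) : ℂ) • (Matrix.posSemidef_conjTranspose_mul_self A).sqrt := by
  symm
  apply Matrix.PosSemidef.eq_sqrt_of_sq_eq
  · exact smul_posSemidef (norm_nonneg c)
      (Matrix.posSemidef_conjTranspose_mul_self A).posSemidef_sqrt
  · have h := (Matrix.posSemidef_conjTranspose_mul_self A).sq_sqrt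
    rw [smul_pow, h, conjTranspose_smul, smul_mul_assoc, Matrix.mul_smul, smul_smul]
    congr 1
    rw [← Complex.ofReal_pow, Complex.sq_norm, Complex.normSq_eq_conj_mul_self]
    rfl

lemma traceNorm_smul {d : ℕ} (c : ℂ) (A : Matrix (Fin d) (Fin d) ℂ) :
    traceNorm (c • A) = ‖c‖ * traceNorm A := by
  unfold traceNorm
  rw [sqrt_smul', trace_smul, smul_eq_mul]
  simp [Complex.ofReal_mul]

lemma hinv2I : (2 * Complex.I)⁻¹ = -Complex.I / 2 := by
  have h : (2 * Complex.I) * (-Complex.I / 2) = 1 := by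
    ring_nf
    simp [Complex.I_sq]
  exact inv_eq_of_mul_eq_one_right h

lemma imM_fam {d : ℕ} (z : ℂ) (ρ : Matrix (Fin d) (Fin d) ℂ) :
    imM (reM ρ + (z * Complex.I) • imM ρ) = z • imM ρ := by
  ext i j
  simp only [imM, reM, Matrix.add_apply, Matrix.smul_apply, Matrix.sub_apply,
    Matrix.transpose_apply, smul_eq_mul, hinv2I]
  ring_nf
  simp only [show Complex.I ^ 3 = -Complex.I by
      rw [pow_succ, Complex.I_sq]; ring,
    Complex.I_sq]
  ring

lemma imM_negI {d : ℕ} (ρ : Matrix (Fin d) (Fin d) ℂ) :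
    imM ((-Complex.I) • imM ρ) = (-1 : ℂ) • imM ρ := by
  ext i j
  simp only [imM, Matrix.smul_apply, Matrix.sub_apply, Matrix.transpose_apply,
    smul_eq_mul, hinv2I]
  ring_nf
  simp only [show Complex.I ^ 3 = -Complex.I by
      rw [pow_succ, Complex.I_sq]; ring,
    Complex.I_sq]
  ring

lemma fam_convex {d : ℕ} (t : ℝ) (ρ : Matrix (Fin d) (Fin d) ℂ) :
    reM ρ + (((1 - t : ℝ) : ℂ) * Complex.I) • imM ρ
      = ((t : ℝ) : ℂ) • reM ρ + (((1 - t : ℝ) : ℂ)) • ρ := by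
  ext i j
  simp only [imM, reM, Matrix.add_apply, Matrix.smul_apply, Matrix.sub_apply,
    Matrix.transpose_apply, smul_eq_mul, hinv2I]
  push_cast
  ring_nf
  simp only [show Complex.I ^ 3 = -Complex.I by
      rw [pow_succ, Complex.I_sq]; ring,
    Complex.I_sq]
  ring

theorem geodesic_dephasing_saturates {d : ℕ} (ρ₀ : Matrix (Fin d) (Fin d) ℂ)
    (hρ₀ : IsDensityMatrix ρ₀)
    (ρfam : ℝ → Matrix (Fin d) (Fin d) ℂ)
    (hfam : ∀ t, ρfam t = reM ρ₀ + (((1 - t : ℝ) : ℂ) * Complex.I) • imM ρ₀) :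
    (∀ t ∈ Set.Icc (0:ℝ) 1, IsDensityMatrix (ρfam t)) ∧
    (∀ t ∈ Set.Icc (0:ℝ) 1,
      traceNorm (imM (ρfam t)) = (1 - t) * traceNorm (imM ρ₀)) ∧
    traceNorm (imM (ρfam 1)) = 0 ∧
    (∀ t : ℝ, ∀ i j, HasDerivAt (fun s => ρfam s i j)
      (((-Complex.I) • imM ρ₀ : Matrix (Fin d) (Fin d) ℂ) i j) t) ∧
    (∫ _t in (0:ℝ)..1, traceNorm (imM ((-Complex.I) • imM ρ₀ : Matrix (Fin d) (Fin d) ℂ)))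
      = traceNorm (imM ρ₀) ∧
    traceNorm (imM ρ₀) = |traceNorm (imM (ρfam 1)) - traceNorm (imM (ρfam 0))| := by
  obtain ⟨hherm, hpsd, htr⟩ := hρ₀
  have hIm : ∀ t : ℝ, imM (ρfam t) = (((1 - t : ℝ) : ℂ)) • imM ρ₀ := by
    intro t
    rw [hfam]
    exact imM_fam _ _
  have hTN : ∀ t ∈ Set.Icc (0:ℝ) 1,
      traceNorm (imM (ρfam t)) = (1 - t) * traceNorm (imM ρ₀) := by
    intro t ht
    rw [hIm t, traceNorm_smul]
    congr 1
    rw [Complex.norm_real, Real.norm_eq_abs, abs_of_nonneg (by linarith [ht.2])]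
  have hreP : (reM ρ₀).PosSemidef := by
    have h : reM ρ₀ = (((2⁻¹ : ℝ) : ℂ)) • (ρ₀ + ρ₀ᵀ) := by
      simp [reM]
    rw [h]
    exact smul_posSemidef (by norm_num) (hpsd.add hpsd.transpose)
  have htrRe : (reM ρ₀).trace = 1 := by
    simp [reM, trace_smul, trace_add, trace_transpose, htr]
    norm_num
  have hdens : ∀ t ∈ Set.Icc (0:ℝ) 1, IsDensityMatrix (ρfam t) := by
    intro t ht
    rw [hfam, fam_convex]
    have hps : (((t : ℝ) : ℂ) • reM ρ₀ + (((1 - t : ℝ) : ℂ)) • ρ₀).PosSemidef :=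
      (smul_posSemidef ht.1 hreP).add (smul_posSemidef (by linarith [ht.2]) hpsd)
    refine ⟨hps.1, hps, ?_⟩
    rw [trace_add, trace_smul, trace_smul, htr, htrRe]
    simp [smul_eq_mul]
  have hderiv : ∀ t : ℝ, ∀ i j, HasDerivAt (fun s => ρfam s i j)
      (((-Complex.I) • imM ρ₀ : Matrix (Fin d) (Fin d) ℂ) i j) t := by
    intro t i j
    have h2 : HasDerivAt (fun s : ℝ => ((1 - s : ℝ) : ℂ)) (-1) t := by
      simpa using ((hasDerivAt_id t).const_sub 1).ofReal_comp
    have h3 := (h2.mul_const (Complex.I * imM ρ₀ i j)).const_add (reM ρ₀ i j)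
    have hfun : (fun s : ℝ => ρfam s i j)
        = fun s : ℝ => reM ρ₀ i j + ((1 - s : ℝ) : ℂ) * (Complex.I * imM ρ₀ i j) := by
      funext s
      rw [hfam]
      simp [Matrix.add_apply, Matrix.smul_apply, smul_eq_mul, mul_assoc]
    rw [hfun]
    refine h3.congr_deriv ?_
    simp [Matrix.smul_apply, smul_eq_mul]
  have h1 : traceNorm (imM (ρfam 1)) = 0 := by
    rw [hTN 1 ⟨zero_le_one, le_refl 1⟩]
    ring
  have h0 : traceNorm (imM (ρfam 0)) = traceNorm (imM ρ₀) := by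
    rw [hTN 0 ⟨le_refl 0, zero_le_one⟩]
    ring
  refine ⟨hdens, hTN, h1, hderiv, ?_, ?_⟩
  · rw [intervalIntegral.integral_const, imM_negI, traceNorm_smul]
    simp
  · rw [h1, h0]
    rw [zero_sub, abs_neg, abs_of_nonneg (traceNorm_nonneg _)]
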